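/- Define the denominator d(g) of g ∈ SL_n(ℚ_p) by d(g) = p^{−n_l} where (n_0 ≥ ... ≥ n_l) (with l = n−1) is the tuple of p-adic valuations of the diagonal entries in the Cartan decomposition g ∈ K_p z K_p, z = diag(p^{n_0},...,p^{n_l}), K_p = SL_n(ℤ_p). Then d(g) equals the smallest p-power p^m such that p^m·g has all entries in ℤ_p, and satisfies d(g g') ≤ d(g)·d(g') and d(g^{−1}) ≤ d(g)^{n−1}. -/

import Mathlib

/-- The exponent `m` of the denominator `d(g) = p^m` of a matrix over `ℚ_p`:
the least `m : ℕ` such that `p^m · g` has all entries in `ℤ_p`. -/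
noncomputable def padicDenExp (p n : ℕ) [Fact p.Prime]
    (g : Matrix (Fin n) (Fin n) ℚ_[p]) : ℕ :=
  sInf {m : ℕ | ∀ i j, ‖(p : ℚ_[p]) ^ m * g i j‖ ≤ 1}


open IsUltrametricDist in
private lemma mul_entry_bound {p : ℕ} [Fact p.Prime] {n : ℕ}
    (A B : Matrix (Fin n) (Fin n) ℚ_[p]) {c d : ℝ} (hc : 0 ≤ c) (hd : 0 ≤ d)
    (hA : ∀ i j, ‖A i j‖ ≤ c) (hB : ∀ i j, ‖B i j‖ ≤ d) (i j : Fin n) :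
    ‖(A * B) i j‖ ≤ c * d := by
  rw [Matrix.mul_apply]
  refine norm_sum_le_of_forall_le_of_nonneg (mul_nonneg hc hd) fun k _ => ?_
  rw [norm_mul]
  exact mul_le_mul (hA i k) (hB k j) (norm_nonneg _) hc

open IsUltrametricDist in
private lemma adjugate_entry_bound {p : ℕ} [Fact p.Prime] {n : ℕ}
    (A : Matrix (Fin n) (Fin n) ℚ_[p]) {c : ℝ} (hc : 1 ≤ c)
    (hA : ∀ i j, ‖A i j‖ ≤ c) (i j : Fin n) :
    ‖A.adjugate i j‖ ≤ c ^ (n - 1) := by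
  have hc0 : (0:ℝ) ≤ c := le_trans zero_le_one hc
  rw [Matrix.adjugate_apply, Matrix.det_apply]
  refine norm_sum_le_of_forall_le_of_nonneg (by positivity) fun σ _ => ?_
  set M := A.updateRow j (Pi.single i 1) with hM
  have hsgn : ‖Equiv.Perm.sign σ • ∏ k, M (σ k) k‖ = ‖∏ k, M (σ k) k‖ := by
    rcases Int.units_eq_one_or (Equiv.Perm.sign σ) with h | h
    · rw [h, one_smul]
    · rw [h]
      simp only [Units.neg_smul, one_smul, norm_neg]
  rw [hsgn]
  set k₀ := σ⁻¹ j with hk₀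
  rw [← Finset.prod_erase_mul _ _ (Finset.mem_univ k₀), norm_mul]
  have h1 : ‖M (σ k₀) k₀‖ ≤ 1 := by
    have : σ k₀ = j := Equiv.apply_symm_apply σ j
    rw [this, hM, Matrix.updateRow_self]
    rcases eq_or_ne k₀ i with h | h
    · rw [h, Pi.single_eq_same, norm_one]
    · simp [Pi.single_apply, h.symm]
  have h2 : ‖∏ k ∈ Finset.univ.erase k₀, M (σ k) k‖ ≤ c ^ (n-1) := by
    have : ∀ k ∈ Finset.univ.erase k₀, ‖M (σ k) k‖ ≤ c := by
      intro k hk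
      have hne : σ k ≠ j := by
        intro h
        exact (Finset.mem_erase.mp hk).1 (by rw [hk₀, ← h, Equiv.Perm.inv_def, Equiv.symm_apply_apply])
      rw [hM, Matrix.updateRow_ne hne]
      exact hA _ _
    calc ‖∏ k ∈ Finset.univ.erase k₀, M (σ k) k‖
        = ∏ k ∈ Finset.univ.erase k₀, ‖M (σ k) k‖ := norm_prod _ _
      _ ≤ ∏ k ∈ Finset.univ.erase k₀, c :=
          Finset.prod_le_prod (fun _ _ => norm_nonneg _) this
      _ = c ^ (n - 1) := by
          rw [Finset.prod_const, Finset.card_erase_of_mem (Finset.mem_univ _),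
            Finset.card_univ, Fintype.card_fin]
  calc ‖∏ k ∈ Finset.univ.erase k₀, M (σ k) k‖ * ‖M (σ k₀) k₀‖
      ≤ c ^ (n-1) * 1 := mul_le_mul h2 h1 (norm_nonneg _) (by positivity)
    _ = c ^ (n-1) := mul_one _

private lemma den_mem_iff {p : ℕ} [Fact p.Prime] (m : ℕ) (x : ℚ_[p]) :
    ‖(p:ℚ_[p])^m * x‖ ≤ 1 ↔ ‖x‖ ≤ (p:ℝ)^m := by
  have hp1 : (1:ℝ) < p := by exact_mod_cast (Fact.out : p.Prime).one_lt
  have hp : (0:ℝ) < (p:ℝ)^m := pow_pos (by linarith) m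
  rw [norm_mul, norm_pow, Padic.norm_p, inv_pow, inv_mul_le_iff₀ hp, mul_one]

private lemma den_set_nonempty {p : ℕ} [Fact p.Prime] {n : ℕ}
    (A : Matrix (Fin n) (Fin n) ℚ_[p]) :
    {m : ℕ | ∀ i j, ‖(p:ℚ_[p])^m * A i j‖ ≤ 1}.Nonempty := by
  have hp1 : (1:ℝ) < p := by exact_mod_cast (Fact.out : p.Prime).one_lt
  obtain ⟨m, hm⟩ := pow_unbounded_of_one_lt (∑ i, ∑ j, ‖A i j‖) hp1
  refine ⟨m, fun i j => (den_mem_iff m _).2 ?_⟩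
  refine le_trans ?_ hm.le
  calc ‖A i j‖ ≤ ∑ j', ‖A i j'‖ :=
        Finset.single_le_sum (fun _ _ => norm_nonneg _) (Finset.mem_univ j)
    _ ≤ ∑ i', ∑ j', ‖A i' j'‖ :=
        Finset.single_le_sum (f := fun i' => ∑ j', ‖A i' j'‖)
          (fun _ _ => Finset.sum_nonneg fun _ _ => norm_nonneg _) (Finset.mem_univ i)

/-- If `g ∈ SL_n(ℚ_p)` has Cartan decomposition `g = k₁ z k₂` with
`k₁, k₂ ∈ SL_n(ℤ_p)` and `z = diag(p^{ν_0},…,p^{ν_{n-1}})`, `ν_0 ≥ … ≥ ν_{n-1}`,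
`∑ ν_i = 0`, then the denominator `d(g)` equals `p^{−ν_{n−1}}`, is the smallest
`p`-power clearing the entries of `g`, and satisfies `d(gg') ≤ d(g)d(g')` and
`d(g⁻¹) ≤ d(g)^{n−1}`. -/
theorem stmt6 (p : ℕ) [Fact p.Prime] (n : ℕ) (hn : 2 ≤ n)
    (g k₁ k₂ : Matrix.SpecialLinearGroup (Fin n) ℚ_[p])
    (hk₁ : ∀ i j, ‖(k₁ : Matrix (Fin n) (Fin n) ℚ_[p]) i j‖ ≤ 1)
    (hk₂ : ∀ i j, ‖(k₂ : Matrix (Fin n) (Fin n) ℚ_[p]) i j‖ ≤ 1)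
    (ν : Fin n → ℤ) (hmono : ∀ i j : Fin n, i ≤ j → ν j ≤ ν i) (hsum : ∑ i, ν i = 0)
    (hcartan : (g : Matrix (Fin n) (Fin n) ℚ_[p]) =
      (k₁ : Matrix (Fin n) (Fin n) ℚ_[p]) *
        Matrix.diagonal (fun i => (p : ℚ_[p]) ^ (ν i)) *
        (k₂ : Matrix (Fin n) (Fin n) ℚ_[p])) :
    ((p : ℝ) ^ (padicDenExp p n (g : Matrix (Fin n) (Fin n) ℚ_[p]))
        = (p : ℝ) ^ (-(ν ⟨n - 1, by omega⟩))) ∧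
    (∀ i j, ‖(p : ℚ_[p]) ^ (padicDenExp p n (g : Matrix (Fin n) (Fin n) ℚ_[p])) *
        (g : Matrix (Fin n) (Fin n) ℚ_[p]) i j‖ ≤ 1) ∧
    (∀ g' : Matrix.SpecialLinearGroup (Fin n) ℚ_[p],
      padicDenExp p n ((g * g' : Matrix.SpecialLinearGroup (Fin n) ℚ_[p]) :
          Matrix (Fin n) (Fin n) ℚ_[p]) ≤
        padicDenExp p n (g : Matrix (Fin n) (Fin n) ℚ_[p]) +
          padicDenExp p n (g' : Matrix (Fin n) (Fin n) ℚ_[p])) ∧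
    padicDenExp p n ((g⁻¹ : Matrix.SpecialLinearGroup (Fin n) ℚ_[p]) :
        Matrix (Fin n) (Fin n) ℚ_[p]) ≤
      (n - 1) * padicDenExp p n (g : Matrix (Fin n) (Fin n) ℚ_[p]) := by
  have hp1 : (1:ℝ) < p := by exact_mod_cast (Fact.out : p.Prime).one_lt
  have hp0 : (0:ℝ) < p := by linarith
  set i₀ : Fin n := ⟨n - 1, by omega⟩ with hi₀
  have hle_i₀ : ∀ i : Fin n, i ≤ i₀ := by
    intro i
    have := i.isLt
    rw [Fin.le_def]
    simp only [hi₀]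
    omega
  -- ν i₀ ≤ 0
  have hν0 : ν i₀ ≤ 0 := by
    by_contra h
    push_neg at h
    have hpos : (0:ℤ) < ∑ i, ν i :=
      Finset.sum_pos (fun i _ => lt_of_lt_of_le h (hmono i i₀ (hle_i₀ i)))
        ⟨i₀, Finset.mem_univ _⟩
    rw [hsum] at hpos
    exact lt_irrefl _ hpos
  set d : ℕ := (-ν i₀).toNat with hd
  have hdz : (d:ℤ) = -ν i₀ := Int.toNat_of_nonneg (by omega)
  have hpd : (p:ℝ) ^ d = (p:ℝ) ^ (-ν i₀) := by rw [← hdz, zpow_natCast]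
  -- inverses of k₁, k₂ are integral
  have hk₁inv : ∀ i j, ‖((k₁⁻¹ : Matrix.SpecialLinearGroup (Fin n) ℚ_[p]) :
      Matrix (Fin n) (Fin n) ℚ_[p]) i j‖ ≤ 1 := by
    intro i j
    rw [Matrix.SpecialLinearGroup.coe_inv]
    simpa using adjugate_entry_bound _ le_rfl hk₁ i j
  have hk₂inv : ∀ i j, ‖((k₂⁻¹ : Matrix.SpecialLinearGroup (Fin n) ℚ_[p]) :
      Matrix (Fin n) (Fin n) ℚ_[p]) i j‖ ≤ 1 := by
    intro i j
    rw [Matrix.SpecialLinearGroup.coe_inv]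
    simpa using adjugate_entry_bound _ le_rfl hk₂ i j
  set D : Matrix (Fin n) (Fin n) ℚ_[p] :=
    Matrix.diagonal (fun i => (p : ℚ_[p]) ^ (ν i)) with hDdef
  -- entries of D
  have hDle : ∀ i j, ‖D i j‖ ≤ (p:ℝ) ^ d := by
    intro i j
    rcases eq_or_ne i j with rfl | hne
    · rw [hDdef, Matrix.diagonal_apply_eq, Padic.norm_p_zpow, hpd]
      exact zpow_le_zpow_right₀ hp1.le (by have := hmono i i₀ (hle_i₀ i); omega)
    · rw [hDdef, Matrix.diagonal_apply_ne _ hne, norm_zero]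
      positivity
  -- entries of g are bounded by p^d
  have hgle : ∀ i j, ‖(g : Matrix (Fin n) (Fin n) ℚ_[p]) i j‖ ≤ (p:ℝ) ^ d := by
    intro i j
    rw [hcartan]
    have h1 := mul_entry_bound (k₁ : Matrix (Fin n) (Fin n) ℚ_[p]) D
      zero_le_one (by positivity) hk₁ hDle
    have h2 := mul_entry_bound _ (k₂ : Matrix (Fin n) (Fin n) ℚ_[p])
      (c := 1 * (p:ℝ)^d) (by positivity) zero_le_one h1 hk₂ i j
    calc ‖((k₁ : Matrix (Fin n) (Fin n) ℚ_[p]) * D *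
          (k₂ : Matrix (Fin n) (Fin n) ℚ_[p])) i j‖ ≤ 1 * (p:ℝ)^d * 1 := h2
      _ = (p:ℝ)^d := by ring
  have hmem : d ∈ {m : ℕ | ∀ i j,
      ‖(p:ℚ_[p])^m * (g : Matrix (Fin n) (Fin n) ℚ_[p]) i j‖ ≤ 1} :=
    fun i j => (den_mem_iff d _).2 (hgle i j)
  -- lower bound
  have hlb : ∀ m ∈ {m : ℕ | ∀ i j,
      ‖(p:ℚ_[p])^m * (g : Matrix (Fin n) (Fin n) ℚ_[p]) i j‖ ≤ 1}, d ≤ m := by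
    intro m hm
    have hgm : ∀ i j, ‖(g : Matrix (Fin n) (Fin n) ℚ_[p]) i j‖ ≤ (p:ℝ)^m :=
      fun i j => (den_mem_iff m _).1 (hm i j)
    -- D = k₁⁻¹ * g * k₂⁻¹
    have e1 : ((k₁⁻¹ : Matrix.SpecialLinearGroup (Fin n) ℚ_[p]) :
        Matrix (Fin n) (Fin n) ℚ_[p]) * (k₁ : Matrix (Fin n) (Fin n) ℚ_[p]) = 1 := by
      rw [← Matrix.SpecialLinearGroup.coe_mul, inv_mul_cancel,
        Matrix.SpecialLinearGroup.coe_one]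
    have e2 : (k₂ : Matrix (Fin n) (Fin n) ℚ_[p]) *
        ((k₂⁻¹ : Matrix.SpecialLinearGroup (Fin n) ℚ_[p]) :
          Matrix (Fin n) (Fin n) ℚ_[p]) = 1 := by
      rw [← Matrix.SpecialLinearGroup.coe_mul, mul_inv_cancel,
        Matrix.SpecialLinearGroup.coe_one]
    have hDeq : D = ((k₁⁻¹ : Matrix.SpecialLinearGroup (Fin n) ℚ_[p]) :
        Matrix (Fin n) (Fin n) ℚ_[p]) * (g : Matrix (Fin n) (Fin n) ℚ_[p]) *
        ((k₂⁻¹ : Matrix.SpecialLinearGroup (Fin n) ℚ_[p]) :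
          Matrix (Fin n) (Fin n) ℚ_[p]) := by
      rw [hcartan]
      calc D = 1 * D * 1 := by rw [Matrix.one_mul, Matrix.mul_one]
        _ = (((k₁⁻¹ : Matrix.SpecialLinearGroup (Fin n) ℚ_[p]) :
              Matrix (Fin n) (Fin n) ℚ_[p]) * (k₁ : Matrix (Fin n) (Fin n) ℚ_[p])) *
            D * ((k₂ : Matrix (Fin n) (Fin n) ℚ_[p]) *
              ((k₂⁻¹ : Matrix.SpecialLinearGroup (Fin n) ℚ_[p]) :
                Matrix (Fin n) (Fin n) ℚ_[p])) := by rw [e1, e2]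
        _ = _ := by simp only [Matrix.mul_assoc]
    have hDm : ‖D i₀ i₀‖ ≤ (p:ℝ)^m := by
      rw [hDeq]
      have h1 := mul_entry_bound _ (g : Matrix (Fin n) (Fin n) ℚ_[p])
        zero_le_one (by positivity) hk₁inv hgm
      have h2 := mul_entry_bound _ _ (c := 1 * (p:ℝ)^m) (by positivity)
        zero_le_one h1 hk₂inv i₀ i₀
      calc _ ≤ 1 * (p:ℝ)^m * 1 := h2
        _ = (p:ℝ)^m := by ring
    have : (p:ℝ)^d ≤ (p:ℝ)^m := by
      calc (p:ℝ)^d = ‖D i₀ i₀‖ := by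
            rw [hDdef, Matrix.diagonal_apply_eq, Padic.norm_p_zpow]
            exact hpd
        _ ≤ (p:ℝ)^m := hDm
    exact (pow_le_pow_iff_right₀ hp1).1 this
  have hEq : padicDenExp p n (g : Matrix (Fin n) (Fin n) ℚ_[p]) = d :=
    le_antisymm (Nat.sInf_le hmem) (le_csInf ⟨d, hmem⟩ hlb)
  refine ⟨?_, ?_, ?_, ?_⟩
  · show (p:ℝ) ^ (padicDenExp p n (g : Matrix (Fin n) (Fin n) ℚ_[p]))
      = (p:ℝ) ^ (-(ν i₀))
    rw [hEq, hpd]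
  · intro i j
    rw [hEq]
    exact hmem i j
  · intro g'
    have hag : ∀ i j, ‖(g : Matrix (Fin n) (Fin n) ℚ_[p]) i j‖ ≤
        (p:ℝ)^(padicDenExp p n (g : Matrix (Fin n) (Fin n) ℚ_[p])) := by
      rw [hEq]
      exact hgle
    set a := padicDenExp p n (g : Matrix (Fin n) (Fin n) ℚ_[p]) with ha
    set b := padicDenExp p n (g' : Matrix (Fin n) (Fin n) ℚ_[p]) with hb
    have hbg : ∀ i j, ‖(g' : Matrix (Fin n) (Fin n) ℚ_[p]) i j‖ ≤ (p:ℝ)^b := by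
      have := Nat.sInf_mem (den_set_nonempty (g' : Matrix (Fin n) (Fin n) ℚ_[p]))
      exact fun i j => (den_mem_iff b _).1 (this i j)
    refine Nat.sInf_le fun i j => (den_mem_iff (a + b) _).2 ?_
    rw [Matrix.SpecialLinearGroup.coe_mul, pow_add]
    exact mul_entry_bound _ _ (by positivity) (by positivity) hag hbg i j
  · have hag : ∀ i j, ‖(g : Matrix (Fin n) (Fin n) ℚ_[p]) i j‖ ≤
        (p:ℝ)^(padicDenExp p n (g : Matrix (Fin n) (Fin n) ℚ_[p])) := by
      rw [hEq]
      exact hgle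
    set a := padicDenExp p n (g : Matrix (Fin n) (Fin n) ℚ_[p]) with ha
    refine Nat.sInf_le fun i j => (den_mem_iff ((n-1)*a) _).2 ?_
    rw [Matrix.SpecialLinearGroup.coe_inv]
    calc ‖(g : Matrix (Fin n) (Fin n) ℚ_[p]).adjugate i j‖
        ≤ ((p:ℝ)^a) ^ (n-1) := adjugate_entry_bound _ (one_le_pow₀ hp1.le) hag i j
      _ = (p:ℝ)^((n-1)*a) := by rw [← pow_mul, mul_comm]
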